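/- Let (N_k) be a sequence of complex numbers with N_k = Σ_{j=1}^n ρ_j λ_j^k, where λ_j are distinct complex numbers all of modulus λ > 0 and ρ_j are nonzero complex numbers. Then there exist γ > 0 and a natural number N such that for every m > N there is ℓ ∈ {0, 1, ..., n−1} with |N_{m+ℓ}|/λ^{m+ℓ} > γ. More generally, if N_k = Γ_k + Ω_k where Γ_k = Σ_{j=1}^n ρ_j λ_j^k with all |λ_j| = λ and Ω_k/λ^k → 0, the same conclusion holds for |N_{m+ℓ}|. -/

import Mathlib

theorem relatively_dense_large_values (n : ℕ) (hn : 0 < n)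
    (lam : Fin n → ℂ) (ρ : Fin n → ℂ) (L : ℝ) (hL : 0 < L)
    (hlam_inj : Function.Injective lam) (hmod : ∀ j, ‖lam j‖ = L)
    (hρ_ne : ∀ j, ρ j ≠ 0)
    (N Γ Ω : ℕ → ℂ)
    (hΓ : ∀ k : ℕ, Γ k = ∑ j, ρ j * lam j ^ k)
    (hNsplit : ∀ k : ℕ, N k = Γ k + Ω k)
    (hΩ : Filter.Tendsto (fun k : ℕ => ‖Ω k‖ / L ^ k) Filter.atTop (nhds 0)) :
    ∃ γ : ℝ, 0 < γ ∧ ∃ N₀ : ℕ, ∀ m : ℕ, N₀ < m →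
      ∃ ℓ : ℕ, ℓ ≤ n - 1 ∧ ‖N (m + ℓ)‖ / L ^ (m + ℓ) > γ := by
  have hLne : (L : ℂ) ≠ 0 := by exact_mod_cast hL.ne'
  set μ : Fin n → ℂ := fun j => lam j / L with hμ
  have hμabs : ∀ j, ‖μ j‖ = 1 := by
    intro j
    simp [hμ, norm_div, hmod, Complex.norm_real, Real.norm_eq_abs, abs_of_pos hL, div_self hL.ne']
  have hμinj : Function.Injective μ := by
    intro a b h
    apply hlam_inj
    simp only [hμ, div_left_inj' hLne] at h
    exact h
  set W : Matrix (Fin n) (Fin n) ℂ := Matrix.of (fun ℓ j => μ j ^ (ℓ : ℕ)) with hW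
  have hWdet : W.det ≠ 0 := by
    have hWT : W.transpose = Matrix.vandermonde μ := by
      ext i j; simp [hW, Matrix.vandermonde]
    rw [← Matrix.det_transpose, hWT]
    exact Matrix.det_vandermonde_ne_zero_iff.mpr hμinj
  have hWunit : IsUnit W.det := isUnit_iff_ne_zero.mpr hWdet
  set j₀ : Fin n := ⟨0, hn⟩ with hj₀
  set r : ℝ := ‖ρ j₀‖ with hr
  have hrpos : 0 < r := by
    simpa [hr] using (norm_pos_iff.mpr (hρ_ne j₀))
  set C : ℝ := ∑ ℓ : Fin n, ‖W⁻¹ j₀ ℓ‖ with hC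
  have hC0 : 0 ≤ C := Finset.sum_nonneg fun _ _ => norm_nonneg _
  set γ : ℝ := r / (3 * (C + 1)) with hγdef
  have hγpos : 0 < γ := by rw [hγdef]; exact div_pos hrpos (by linarith)
  -- key claim
  have key : ∀ m : ℕ, ∃ ℓ : Fin n,
      3 * γ ≤ ‖Γ (m + ℓ)‖ / L ^ (m + (ℓ : ℕ)) := by
    intro m
    by_contra hcon
    push_neg at hcon
    set v : Fin n → ℂ := fun j => ρ j * μ j ^ m with hv
    have hWv : ∀ ℓ : Fin n, W.mulVec v ℓ = Γ (m + ℓ) / (L : ℂ) ^ (m + (ℓ : ℕ)) := by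
      intro ℓ
      rw [hΓ]
      simp only [Matrix.mulVec, dotProduct, hW, hv, Matrix.of_apply]
      rw [Finset.sum_div]
      refine Finset.sum_congr rfl fun j _ => ?_
      have hpow : μ j ^ (m + (ℓ : ℕ)) = lam j ^ (m + (ℓ : ℕ)) / (L : ℂ) ^ (m + (ℓ : ℕ)) := by
        rw [hμ, div_pow]
      have : μ j ^ (ℓ : ℕ) * (ρ j * μ j ^ m) = ρ j * μ j ^ (m + (ℓ : ℕ)) := by
        rw [pow_add]; ring
      rw [this, hpow, mul_div_assoc]
    have habsWv : ∀ ℓ : Fin n,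
        ‖W.mulVec v ℓ‖ = ‖Γ (m + ℓ)‖ / L ^ (m + (ℓ : ℕ)) := by
      intro ℓ
      rw [hWv, norm_div, norm_pow, Complex.norm_real, Real.norm_eq_abs, abs_of_pos hL]
    have hvW : v = (W⁻¹).mulVec (W.mulVec v) := by
      rw [Matrix.mulVec_mulVec, Matrix.nonsing_inv_mul W hWunit, Matrix.one_mulVec]
    have hrv : r = ‖v j₀‖ := by
      simp [hv, hr, norm_mul, norm_pow, hμabs]
    have hbound : r ≤ C * (3 * γ) := by
      rw [hrv]
      conv_lhs => rw [hvW]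
      simp only [Matrix.mulVec, dotProduct]
      calc ‖∑ ℓ, W⁻¹ j₀ ℓ * W.mulVec v ℓ‖
          ≤ ∑ ℓ, ‖W⁻¹ j₀ ℓ * W.mulVec v ℓ‖ := by
            exact norm_sum_le _ _
        _ ≤ ∑ ℓ, ‖W⁻¹ j₀ ℓ‖ * (3 * γ) := by
            refine Finset.sum_le_sum fun ℓ _ => ?_
            rw [norm_mul]
            refine mul_le_mul_of_nonneg_left ?_ (norm_nonneg _)
            rw [habsWv]
            exact le_of_lt (hcon ℓ)
        _ = C * (3 * γ) := by rw [← Finset.sum_mul, hC]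
    have h3 : 3 * γ = r / (C + 1) := by
      rw [hγdef]; field_simp
    have hfin : C * (3 * γ) < r := by
      rw [h3, ← mul_div_assoc, div_lt_iff₀ (by linarith)]
      nlinarith
    linarith
  -- choose N₀
  have hev : ∀ᶠ k in Filter.atTop, ‖Ω k‖ / L ^ k < γ :=
    hΩ.eventually_lt_const hγpos
  obtain ⟨N₀, hN₀⟩ := Filter.eventually_atTop.mp hev
  refine ⟨γ, hγpos, N₀, fun m hm => ?_⟩
  obtain ⟨ℓ, hℓ⟩ := key m
  refine ⟨(ℓ : ℕ), by have := ℓ.isLt; omega, ?_⟩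
  set k := m + (ℓ : ℕ) with hk
  have hkN₀ : N₀ ≤ k := le_trans hm.le (Nat.le_add_right m ℓ)
  have hΩk : ‖Ω k‖ / L ^ k < γ := hN₀ k hkN₀
  have hΓeq : Γ k = N k - Ω k := by rw [hNsplit k]; ring
  have htri : ‖Γ k‖ ≤ ‖N k‖ + ‖Ω k‖ := by
    rw [hΓeq, sub_eq_add_neg]
    simpa using norm_add_le (N k) (-Ω k)
  have hP : (0 : ℝ) < L ^ k := by positivity
  have h1 : ‖Γ k‖ / L ^ k
      ≤ ‖N k‖ / L ^ k + ‖Ω k‖ / L ^ k := by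
    rw [← add_div]
    exact div_le_div_of_nonneg_right htri hP.le
  have h2 : 3 * γ ≤ ‖Γ k‖ / L ^ k := hℓ
  linarith
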